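/- If the empty trace ε belongs to ρ(i), then there exists an interaction i' such that i ↝_L i', i.e., i can be pruned on the full set of lifelines L. -/
import Mathlib


/-- Conflict predicate: trace `t` contains an action occurring on lifeline `l`. -/
def conflict {A L : Type} (theta : A → L) : List A → L → Prop
  | [], _ => False
  | a :: t, l => theta a = l ∨ conflict theta t l

/-- Conditional conflict predicate: trace `t` contains an action on lifeline `l` with `l ∉ r`. -/
def condConflict {A L : Type} (theta : A → L) (r : Set L) : List A → L → Prop
  | [], _ => False
  | a :: t, l => (theta a = l ∧ l ∉ r) ∨ condConflict theta r t l

/-- Conditional sequencing: `CondSeq theta r t1 t2 t` means `t ∈ t1 ⫽_r t2`. -/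
inductive CondSeq {A L : Type} (theta : A → L) (r : Set L) :
    List A → List A → List A → Prop
  | nil_left (t2 : List A) : CondSeq theta r [] t2 t2
  | nil_right (t1 : List A) : CondSeq theta r t1 [] t1
  | left {a1 a2 : A} {t1 t2 t : List A} :
      CondSeq theta r t1 (a2 :: t2) t →
      CondSeq theta r (a1 :: t1) (a2 :: t2) (a1 :: t)
  | right {a1 a2 : A} {t1 t2 t : List A} :
      CondSeq theta r (a1 :: t1) t2 t →
      ¬ condConflict theta r (a1 :: t1) (theta a2) →
      CondSeq theta r (a1 :: t1) (a2 :: t2) (a2 :: t)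

/-- Interaction terms. -/
inductive Interaction (A L : Type) where
  | empty : Interaction A L
  | act : A → Interaction A L
  | alt : Interaction A L → Interaction A L → Interaction A L
  | strict : Interaction A L → Interaction A L → Interaction A L
  | coreg : Set L → Interaction A L → Interaction A L → Interaction A L
  | loopS : Interaction A L → Interaction A L
  | loopC : Set L → Interaction A L → Interaction A L

/-- Concatenation (strict sequencing) of sets of traces. -/
def concatSet {A : Type} (S1 S2 : Set (List A)) : Set (List A) :=
  {t | ∃ u ∈ S1, ∃ v ∈ S2, t = u ++ v}

/-- Conditional sequencing of sets of traces. -/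
def condSeqSet {A L : Type} (theta : A → L) (r : Set L) (S1 S2 : Set (List A)) :
    Set (List A) :=
  {t | ∃ u ∈ S1, ∃ v ∈ S2, CondSeq theta r u v t}

/-- `j`-th power of a trace set under a binary scheduling operator. -/
def powOp {A : Type} (op : Set (List A) → Set (List A) → Set (List A))
    (S : Set (List A)) : ℕ → Set (List A)
  | 0 => {([] : List A)}
  | n + 1 => op S (powOp op S n)

/-- Kleene closure of a trace set under a binary scheduling operator. -/
def kleene {A : Type} (op : Set (List A) → Set (List A) → Set (List A))
    (S : Set (List A)) : Set (List A) :=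
  ⋃ n : ℕ, powOp op S n

/-- Denotational semantics of interactions (sets of global traces). -/
def rho {A L : Type} (theta : A → L) : Interaction A L → Set (List A)
  | .empty => {([] : List A)}
  | .act a => {[a]}
  | .alt i1 i2 => rho theta i1 ∪ rho theta i2
  | .strict i1 i2 => concatSet (rho theta i1) (rho theta i2)
  | .coreg r i1 i2 => condSeqSet theta r (rho theta i1) (rho theta i2)
  | .loopS i1 => kleene concatSet (rho theta i1)
  | .loopC r i1 => kleene (condSeqSet theta r) (rho theta i1)

/-- `CannotPrune theta L' i` : all behaviors of `i` involve an action on a lifeline of `L'`. -/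
inductive CannotPrune {A L : Type} (theta : A → L) (L' : Set L) : Interaction A L → Prop
  | act {a : A} : theta a ∈ L' → CannotPrune theta L' (.act a)
  | alt {i1 i2 : Interaction A L} :
      CannotPrune theta L' i1 → CannotPrune theta L' i2 → CannotPrune theta L' (.alt i1 i2)
  | strict_left {i1 i2 : Interaction A L} :
      CannotPrune theta L' i1 → CannotPrune theta L' (.strict i1 i2)
  | strict_right {i1 i2 : Interaction A L} :
      CannotPrune theta L' i2 → CannotPrune theta L' (.strict i1 i2)
  | coreg_left {r : Set L} {i1 i2 : Interaction A L} :
      CannotPrune theta L' i1 → CannotPrune theta L' (.coreg r i1 i2)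
  | coreg_right {r : Set L} {i1 i2 : Interaction A L} :
      CannotPrune theta L' i2 → CannotPrune theta L' (.coreg r i1 i2)

/-- Pruning relation: `Prunes theta L' i i'` means `i ↝_{L'} i'`. -/
inductive Prunes {A L : Type} (theta : A → L) (L' : Set L) :
    Interaction A L → Interaction A L → Prop
  | empty : Prunes theta L' .empty .empty
  | act {a : A} : theta a ∉ L' → Prunes theta L' (.act a) (.act a)
  | alt_both {i1 i2 i1' i2' : Interaction A L} :
      Prunes theta L' i1 i1' → Prunes theta L' i2 i2' →
      Prunes theta L' (.alt i1 i2) (.alt i1' i2')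
  | alt_left {i1 i2 i1' : Interaction A L} :
      Prunes theta L' i1 i1' → CannotPrune theta L' i2 →
      Prunes theta L' (.alt i1 i2) i1'
  | alt_right {i1 i2 i2' : Interaction A L} :
      Prunes theta L' i2 i2' → CannotPrune theta L' i1 →
      Prunes theta L' (.alt i1 i2) i2'
  | strict {i1 i2 i1' i2' : Interaction A L} :
      Prunes theta L' i1 i1' → Prunes theta L' i2 i2' →
      Prunes theta L' (.strict i1 i2) (.strict i1' i2')
  | coreg {r : Set L} {i1 i2 i1' i2' : Interaction A L} :
      Prunes theta L' i1 i1' → Prunes theta L' i2 i2' →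
      Prunes theta L' (.coreg r i1 i2) (.coreg r i1' i2')
  | loopS {i1 i1' : Interaction A L} :
      Prunes theta L' i1 i1' → Prunes theta L' (.loopS i1) (.loopS i1')
  | loopS_elim {i1 : Interaction A L} :
      CannotPrune theta L' i1 → Prunes theta L' (.loopS i1) .empty
  | loopC {r : Set L} {i1 i1' : Interaction A L} :
      Prunes theta L' i1 i1' → Prunes theta L' (.loopC r i1) (.loopC r i1')
  | loopC_elim {r : Set L} {i1 : Interaction A L} :
      CannotPrune theta L' i1 → Prunes theta L' (.loopC r i1) .empty

lemma condSeq_nil {A L : Type} {theta : A → L} {r : Set L} {u v : List A}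
    (h : CondSeq theta r u v []) : u = [] ∧ v = [] := by
  cases h <;> simp_all

lemma cannotPrune_not_nil {A L : Type} {theta : A → L} {i : Interaction A L}
    (h : CannotPrune theta (Set.univ : Set L) i) : ([] : List A) ∉ rho theta i := by
  induction h with
  | act _ => simp [rho]
  | alt _ _ ih1 ih2 => intro hx; rcases hx with hx | hx <;> [exact ih1 hx; exact ih2 hx]
  | strict_left _ ih =>
      rintro ⟨u, hu, v, hv, huv⟩
      exact ih ((List.append_eq_nil_iff.mp huv.symm).1 ▸ hu)
  | strict_right _ ih =>
      rintro ⟨u, hu, v, hv, huv⟩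
      exact ih ((List.append_eq_nil_iff.mp huv.symm).2 ▸ hv)
  | coreg_left _ ih =>
      rintro ⟨u, hu, v, hv, huv⟩
      exact ih ((condSeq_nil huv).1 ▸ hu)
  | coreg_right _ ih =>
      rintro ⟨u, hu, v, hv, huv⟩
      exact ih ((condSeq_nil huv).2 ▸ hv)

lemma prune_total {A L : Type} (theta : A → L) (i : Interaction A L) :
    (∃ i', Prunes theta (Set.univ : Set L) i i') ∨ CannotPrune theta (Set.univ : Set L) i := by
  induction i with
  | empty => exact Or.inl ⟨_, Prunes.empty⟩
  | act a => exact Or.inr (CannotPrune.act (Set.mem_univ _))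
  | alt i1 i2 ih1 ih2 =>
      rcases ih1 with ⟨i1', h1⟩ | h1
      · rcases ih2 with ⟨i2', h2⟩ | h2
        · exact Or.inl ⟨_, Prunes.alt_both h1 h2⟩
        · exact Or.inl ⟨_, Prunes.alt_left h1 h2⟩
      · rcases ih2 with ⟨i2', h2⟩ | h2
        · exact Or.inl ⟨_, Prunes.alt_right h2 h1⟩
        · exact Or.inr (CannotPrune.alt h1 h2)
  | strict i1 i2 ih1 ih2 =>
      rcases ih1 with ⟨i1', h1⟩ | h1
      · rcases ih2 with ⟨i2', h2⟩ | h2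
        · exact Or.inl ⟨_, Prunes.strict h1 h2⟩
        · exact Or.inr (CannotPrune.strict_right h2)
      · exact Or.inr (CannotPrune.strict_left h1)
  | coreg r i1 i2 ih1 ih2 =>
      rcases ih1 with ⟨i1', h1⟩ | h1
      · rcases ih2 with ⟨i2', h2⟩ | h2
        · exact Or.inl ⟨_, Prunes.coreg h1 h2⟩
        · exact Or.inr (CannotPrune.coreg_right h2)
      · exact Or.inr (CannotPrune.coreg_left h1)
  | loopS i1 ih =>
      rcases ih with ⟨i1', h1⟩ | h1
      · exact Or.inl ⟨_, Prunes.loopS h1⟩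
      · exact Or.inl ⟨_, Prunes.loopS_elim h1⟩
  | loopC r i1 ih =>
      rcases ih with ⟨i1', h1⟩ | h1
      · exact Or.inl ⟨_, Prunes.loopC h1⟩
      · exact Or.inl ⟨_, Prunes.loopC_elim h1⟩

/-- An interaction which accepts the empty trace can be pruned on all lifelines. -/
theorem accepts_nil_prune_all {A L : Type} (theta : A → L)
    (i : Interaction A L) (h : ([] : List A) ∈ rho theta i) :
    ∃ i' : Interaction A L, Prunes theta (Set.univ : Set L) i i' := by
  rcases prune_total theta i with h1 | h1
  · exact h1
  · exact absurd h (cannotPrune_not_nil h1)
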